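/- Let P(X_1,…,X_n) be a symmetric polynomial over ℂ and let E_{k_i} be the shift operator in variable k_i (E_x p(x) = p(x+1)). Then P(E_{k_1},…,E_{k_n}) applied to ∏_{1≤i<j≤n}(k_j − k_i)/(j−i) equals P(1,1,…,1) · ∏_{1≤i<j≤n}(k_j − k_i)/(j−i). -/

import Mathlib

open MvPolynomial Finset

variable {n : ℕ}

-- product over pairs = nested product
lemma prod_pairs {M : Type*} [CommMonoid M] (f : Fin n × Fin n → M) :
    ∏ p ∈ Finset.univ.filter (fun p : Fin n × Fin n => p.1 < p.2), f p
      = ∏ i, ∏ j ∈ Finset.Ioi i, f (i, j) := by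
  rw [Finset.prod_sigma']
  refine Finset.prod_bij' (fun p _ => (⟨p.1, p.2⟩ : Σ _ : Fin n, Fin n))
    (fun x _ => (x.1, x.2)) ?_ ?_ ?_ ?_ ?_
  · rintro ⟨i, j⟩ h
    simp only [Finset.mem_filter, Finset.mem_univ, true_and] at h
    simp [h]
  · rintro ⟨i, j⟩ h
    simp only [Finset.mem_sigma, Finset.mem_univ, Finset.mem_Ioi] at h
    simp [h]
  · rintro ⟨i, j⟩ -; rfl
  · rintro ⟨i, j⟩ -; rfl
  · rintro ⟨i, j⟩ -; rfl

lemma vdm_prod {R : Type*} [CommRing R] (u : Fin n → R) :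
    ∏ p ∈ Finset.univ.filter (fun p : Fin n × Fin n => p.1 < p.2), (u p.2 - u p.1)
      = (Matrix.vandermonde u).det := by
  rw [Matrix.det_vandermonde, prod_pairs]

lemma vdm_swap {R : Type*} [CommRing R] (u : Fin n → R) {i j : Fin n} (hij : i ≠ j) :
    ∏ p ∈ Finset.univ.filter (fun p : Fin n × Fin n => p.1 < p.2),
        ((u ∘ Equiv.swap i j) p.2 - (u ∘ Equiv.swap i j) p.1)
      = - ∏ p ∈ Finset.univ.filter (fun p : Fin n × Fin n => p.1 < p.2), (u p.2 - u p.1) := by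
  rw [vdm_prod, vdm_prod]
  have h1 : Matrix.vandermonde (u ∘ Equiv.swap i j)
      = (Matrix.vandermonde u).submatrix (Equiv.swap i j) id := by
    ext a b; rfl
  rw [h1, Matrix.det_permute, Equiv.Perm.sign_swap hij]
  push_cast
  ring

/-- the substitution X i ↦ X j -/
noncomputable def sgn (i j : Fin n) : Fin n → MvPolynomial (Fin n) ℂ :=
  fun t => if t = i then X j else X t

lemma dvd_of_subst_eq_zero {i j : Fin n} (hij : i ≠ j) (W : MvPolynomial (Fin n) ℂ)
    (h : aeval (sgn i j) W = 0) : (X j - X i : MvPolynomial (Fin n) ℂ) ∣ W := by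
  set I : Ideal (MvPolynomial (Fin n) ℂ) := Ideal.span {X j - X i} with hI
  have hmem : (X j - X i : MvPolynomial (Fin n) ℂ) ∈ I := Ideal.subset_span rfl
  have key : (Ideal.Quotient.mkₐ ℂ I).comp (aeval (sgn i j)) = Ideal.Quotient.mkₐ ℂ I := by
    apply MvPolynomial.algHom_ext
    intro t
    simp only [AlgHom.comp_apply, aeval_X, Ideal.Quotient.mkₐ_eq_mk, sgn]
    by_cases ht : t = i
    · subst ht
      simp only [if_pos rfl]
      rw [Ideal.Quotient.mk_eq_mk_iff_sub_mem]
      exact hmem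
    · rw [if_neg ht]
  have h2 : Ideal.Quotient.mkₐ ℂ I W = 0 := by
    have hk := DFunLike.congr_fun key W
    rw [AlgHom.comp_apply, h, map_zero] at hk
    exact hk.symm
  rw [← Ideal.mem_span_singleton]
  rw [Ideal.Quotient.mkₐ_eq_mk, Ideal.Quotient.eq_zero_iff_mem] at h2
  exact h2

lemma subst_factor_ne_zero {i j : Fin n} (hij : i < j) {p : Fin n × Fin n} (hp : p.1 < p.2)
    (hne : p ≠ (i, j)) :
    aeval (sgn i j) (X p.2 - X p.1 : MvPolynomial (Fin n) ℂ) ≠ 0 := by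
  have hfact : aeval (sgn i j) (X p.2 - X p.1 : MvPolynomial (Fin n) ℂ)
      = sgn i j p.2 - sgn i j p.1 := by simp
  rw [hfact]
  -- sgn values are variables; show they are distinct variables
  have : ∃ a b : Fin n, a ≠ b ∧ sgn i j p.2 = X a ∧ sgn i j p.1 = X b := by
    unfold sgn
    by_cases h2 : p.2 = i <;> by_cases h1 : p.1 = i
    · exact absurd (h1.trans h2.symm) (ne_of_lt hp)
    · refine ⟨j, p.1, ?_, by simp [h2], by simp [h1]⟩
      intro hc
      subst hc
      exact absurd (h2 ▸ hp) (by simp [h2]; omega)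
    · refine ⟨p.2, j, ?_, by simp [h2], by simp [h1]⟩
      intro hc
      apply hne
      rw [Prod.ext_iff]
      exact ⟨h1, hc⟩
    · refine ⟨p.2, p.1, (ne_of_lt hp).symm, by simp [h2], by simp [h1]⟩
  obtain ⟨a, b, hab, ha, hb⟩ := this
  rw [ha, hb]
  exact sub_ne_zero_of_ne (fun hc => hab (MvPolynomial.X_injective hc))

lemma prod_dvd_of_subst (s : Finset (Fin n × Fin n)) (hs : ∀ p ∈ s, p.1 < p.2) :
    ∀ W : MvPolynomial (Fin n) ℂ, (∀ p ∈ s, aeval (sgn p.1 p.2) W = 0) →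
    (∏ p ∈ s, (X p.2 - X p.1) : MvPolynomial (Fin n) ℂ) ∣ W := by
  induction s using Finset.induction_on with
  | empty => intro W _; simp
  | @insert q s hq ih =>
    intro W hW
    have hq1 : q.1 < q.2 := hs q (Finset.mem_insert_self q s)
    obtain ⟨W', hW'⟩ := dvd_of_subst_eq_zero (ne_of_lt hq1) W
      (hW q (Finset.mem_insert_self q s))
    have hdvd : (∏ p ∈ s, (X p.2 - X p.1) : MvPolynomial (Fin n) ℂ) ∣ W' := by
      apply ih (fun p hp => hs p (Finset.mem_insert_of_mem hp))
      intro p hp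
      have h0 : aeval (sgn p.1 p.2) W = 0 := hW p (Finset.mem_insert_of_mem hp)
      rw [hW', map_mul] at h0
      have hfac : aeval (sgn p.1 p.2) (X q.2 - X q.1 : MvPolynomial (Fin n) ℂ) ≠ 0 :=
        subst_factor_ne_zero (hs p (Finset.mem_insert_of_mem hp)) hq1
          (fun hc => hq (hc ▸ hp))
      rcases mul_eq_zero.mp h0 with h | h
      · exact absurd h hfac
      · exact h
    obtain ⟨Q, hQ⟩ := hdvd
    rw [Finset.prod_insert hq, hW', hQ]
    exact ⟨Q, by ring⟩

lemma my_totalDegree_neg (p : MvPolynomial (Fin n) ℂ) : (-p).totalDegree = p.totalDegree := by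
  unfold MvPolynomial.totalDegree
  rw [MvPolynomial.support_neg]

lemma my_totalDegree_sub_le (p q : MvPolynomial (Fin n) ℂ) :
    (p - q).totalDegree ≤ max p.totalDegree q.totalDegree := by
  rw [sub_eq_add_neg]
  refine le_trans (MvPolynomial.totalDegree_add p (-q)) ?_
  rw [my_totalDegree_neg]

lemma prod_shift_sub_prod {ι : Type*} [DecidableEq ι] (v : ι → MvPolynomial (Fin n) ℂ) (e : ι → ℂ)
    (hv : ∀ p, (v p).totalDegree ≤ 1) (s : Finset ι) :
    (∏ p ∈ s, (v p + C (e p))) - ∏ p ∈ s, v p = 0 ∨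
      ((∏ p ∈ s, (v p + C (e p))) - ∏ p ∈ s, v p).totalDegree < s.card := by
  induction s using Finset.induction_on with
  | empty => left; simp
  | @insert a s ha ih =>
    right
    have hprodv : (∏ p ∈ s, v p).totalDegree ≤ s.card := by
      refine le_trans (MvPolynomial.totalDegree_finset_prod s v) ?_
      calc ∑ p ∈ s, (v p).totalDegree ≤ ∑ p ∈ s, 1 := Finset.sum_le_sum (fun p _ => hv p)
        _ = s.card := by simp
    have key : (∏ p ∈ insert a s, (v p + C (e p))) - ∏ p ∈ insert a s, v p
        = C (e a) * ∏ p ∈ s, v p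
          + (v a + C (e a)) * ((∏ p ∈ s, (v p + C (e p))) - ∏ p ∈ s, v p) := by
      rw [Finset.prod_insert ha, Finset.prod_insert ha]
      ring
    rw [key, Finset.card_insert_of_notMem ha]
    refine lt_of_le_of_lt (MvPolynomial.totalDegree_add _ _) ?_
    rw [max_lt_iff]
    constructor
    · refine lt_of_le_of_lt (MvPolynomial.totalDegree_mul _ _) ?_
      rw [MvPolynomial.totalDegree_C]
      omega
    · rcases ih with h0 | hlt
      · rw [h0, mul_zero, MvPolynomial.totalDegree_zero]
        omega
      · refine lt_of_le_of_lt (MvPolynomial.totalDegree_mul _ _) ?_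
        have h1 : (v a + C (e a)).totalDegree ≤ 1 := by
          refine le_trans (MvPolynomial.totalDegree_add _ _) ?_
          rw [MvPolynomial.totalDegree_C]
          exact max_le (hv a) (Nat.zero_le 1)
        omega

lemma psi_monomial (c : Fin n → ℂ) (α : Fin n →₀ ℕ) (a : ℂ) :
    aeval (fun t => Polynomial.C (c t) * Polynomial.X) (monomial α a)
      = Polynomial.C (a * ∏ t ∈ α.support, c t ^ α t) * Polynomial.X ^ α.degree := by
  rw [aeval_monomial]
  rw [Finsupp.prod]
  simp_rw [mul_pow]
  rw [Finset.prod_mul_distrib, Finset.prod_pow_eq_pow_sum]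
  simp_rw [← map_pow, ← map_prod]
  rw [Finsupp.degree, Polynomial.algebraMap_eq, ← mul_assoc, ← map_mul]
  rfl

lemma psi_coeff (c : Fin n → ℂ) (Q : MvPolynomial (Fin n) ℂ) (m : ℕ) :
    (aeval (fun t => Polynomial.C (c t) * Polynomial.X) Q).coeff m
      = eval c (homogeneousComponent m Q) := by
  conv_lhs => rw [Q.as_sum]
  rw [map_sum, Polynomial.finset_sum_coeff]
  rw [homogeneousComponent_apply, map_sum, Finset.sum_filter]
  apply Finset.sum_congr rfl
  intro α _
  rw [psi_monomial, Polynomial.coeff_C_mul, Polynomial.coeff_X_pow, eval_monomial, Finsupp.prod]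
  by_cases h : α.degree = m
  · rw [if_pos h, if_pos h.symm, mul_one]
  · rw [if_neg h, if_neg (fun hc => h hc.symm), mul_zero]

lemma psi_natDegree_le (c : Fin n → ℂ) (Q : MvPolynomial (Fin n) ℂ) :
    (aeval (fun t => Polynomial.C (c t) * Polynomial.X) Q).natDegree ≤ Q.totalDegree := by
  conv_lhs => rw [Q.as_sum]
  rw [map_sum]
  refine le_trans (Polynomial.natDegree_sum_le _ _) ?_
  rw [Finset.fold_max_le]
  constructor
  · exact Nat.zero_le _
  intro α hα
  rw [Function.comp, psi_monomial]
  refine le_trans (Polynomial.natDegree_C_mul_le _ _) ?_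
  refine le_trans (Polynomial.natDegree_X_pow_le _) ?_
  exact MvPolynomial.le_totalDegree hα

lemma sgn_swap {i j : Fin n} (t : Fin n) (hij : i < j) :
    sgn i j (Equiv.swap i j t) = sgn i j t := by
  unfold sgn
  rcases eq_or_ne t i with rfl | hti
  · simp [Equiv.swap_apply_left, (ne_of_lt hij).symm]
  rcases eq_or_ne t j with rfl | htj
  · simp [Equiv.swap_apply_right, (ne_of_lt hij).symm]
  · rw [Equiv.swap_apply_of_ne_of_ne hti htj]

lemma subst_W_eq_zero (P : MvPolynomial (Fin n) ℂ) (hP : P.IsSymmetric)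
    {i j : Fin n} (hij : i < j) :
    aeval (sgn i j) (∑ d ∈ P.support, C (P.coeff d) *
        ∏ p ∈ Finset.univ.filter (fun p : Fin n × Fin n => p.1 < p.2),
          (X p.2 - X p.1 + C ((d p.2 : ℂ) - (d p.1 : ℂ)))) = 0 := by
  classical
  set σ := Equiv.swap i j with hσ
  set y : (Fin n →₀ ℕ) → Fin n → MvPolynomial (Fin n) ℂ :=
    fun d t => sgn i j t + C (d t : ℂ) with hy
  rw [map_sum]
  have hterm : ∀ d : Fin n →₀ ℕ, aeval (sgn i j) (C (P.coeff d) *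
      ∏ p ∈ Finset.univ.filter (fun p : Fin n × Fin n => p.1 < p.2),
        (X p.2 - X p.1 + C ((d p.2 : ℂ) - (d p.1 : ℂ))))
      = C (P.coeff d) * ∏ p ∈ Finset.univ.filter (fun p : Fin n × Fin n => p.1 < p.2),
          (y d p.2 - y d p.1) := by
    intro d
    rw [map_mul, map_prod]
    simp only [map_add, map_sub, aeval_X, aeval_C, algebraMap_eq]
    congr 1
    refine Finset.prod_congr rfl (fun p _ => ?_)
    ring
  rw [Finset.sum_congr rfl (fun d (_ : d ∈ P.support) => hterm d)]
  have hcoeff : ∀ d, P.coeff (Finsupp.mapDomain σ d) = P.coeff d := by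
    intro d
    conv_lhs => rw [← hP σ]
    exact coeff_rename_mapDomain σ σ.injective P d
  have happly : ∀ (d : Fin n →₀ ℕ) t, (Finsupp.mapDomain σ d) t = d (σ t) := by
    intro d t
    rw [Finsupp.mapDomain_equiv_apply]
    simp [hσ]
  have hyy : ∀ d, y (Finsupp.mapDomain σ d) = (y d) ∘ σ := by
    intro d
    funext t
    simp only [hy, Function.comp_apply, happly d t, sgn_swap t hij]
    rw [hσ, sgn_swap t hij]
  have hij' : (i, j) ∈ Finset.univ.filter (fun p : Fin n × Fin n => p.1 < p.2) := by
    simp [hij]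
  have hzero : ∀ d : Fin n →₀ ℕ, d i = d j →
      ∏ p ∈ Finset.univ.filter (fun p : Fin n × Fin n => p.1 < p.2),
        (y d p.2 - y d p.1) = 0 := by
    intro d hd
    refine Finset.prod_eq_zero hij' ?_
    simp only [hy]
    unfold sgn
    rw [if_pos rfl, if_neg (ne_of_lt hij).symm, hd]
    ring
  refine Finset.sum_involution (fun d _ => Finsupp.mapDomain σ d) ?_ ?_ ?_ ?_
  · -- f d + f (g d) = 0
    intro d hd
    rcases eq_or_ne (d i) (d j) with he | he
    · have h1 := hzero d he
      have h2 : Finsupp.mapDomain σ d = d := by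
        ext t
        rw [happly]
        rcases eq_or_ne t i with rfl | hti
        · simp [hσ, Equiv.swap_apply_left, he]
        rcases eq_or_ne t j with rfl | htj
        · simp [hσ, Equiv.swap_apply_right, he]
        · rw [hσ, Equiv.swap_apply_of_ne_of_ne hti htj]
      rw [h2, h1, mul_zero, add_zero]
    · rw [hcoeff, hyy, vdm_swap (y d) (ne_of_lt hij)]
      ring
  · -- f d ≠ 0 → g d ≠ d
    intro d hd hne h2
    apply hne
    have : d i = d j := by
      have := congrArg (fun f : Fin n →₀ ℕ => f i) h2
      simp only [happly] at this
      rw [← this, hσ, Equiv.swap_apply_left]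
    rw [hzero d this, mul_zero]
  · -- g_mem
    intro d hd
    rw [mem_support_iff] at hd ⊢
    rw [hcoeff]
    exact hd
  · -- involutive
    intro d hd
    rw [← Finsupp.mapDomain_comp]
    convert Finsupp.mapDomain_id
    funext t
    simp [hσ]

lemma main_identity (P : MvPolynomial (Fin n) ℂ) (hP : P.IsSymmetric) :
    ∑ d ∈ P.support, C (P.coeff d) *
        ∏ p ∈ Finset.univ.filter (fun p : Fin n × Fin n => p.1 < p.2),
          (X p.2 - X p.1 + C ((d p.2 : ℂ) - (d p.1 : ℂ)))
      = C (eval (fun _ => (1 : ℂ)) P) *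
          ∏ p ∈ Finset.univ.filter (fun p : Fin n × Fin n => p.1 < p.2),
            (X p.2 - X p.1 : MvPolynomial (Fin n) ℂ) := by
  classical
  rw [← sub_eq_zero]
  by_contra hDne
  -- notation
  set Pr : Finset (Fin n × Fin n) := Finset.univ.filter (fun p => p.1 < p.2) with hPr
  set V : MvPolynomial (Fin n) ℂ := ∏ p ∈ Pr, (X p.2 - X p.1) with hV
  set term : (Fin n →₀ ℕ) → MvPolynomial (Fin n) ℂ :=
    fun d => ∏ p ∈ Pr, (X p.2 - X p.1 + C ((d p.2 : ℂ) - (d p.1 : ℂ))) with hterm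
  set W : MvPolynomial (Fin n) ℂ := ∑ d ∈ P.support, C (P.coeff d) * term d with hW
  have hc0 : eval (fun _ => (1 : ℂ)) P = ∑ d ∈ P.support, P.coeff d := by
    rw [eval_eq]
    exact Finset.sum_congr rfl (fun d _ => by simp)
  have hDsum : W - C (eval (fun _ => (1 : ℂ)) P) * V
      = ∑ d ∈ P.support, C (P.coeff d) * (term d - V) := by
    rw [hc0, map_sum, Finset.sum_mul, ← Finset.sum_sub_distrib]
    exact Finset.sum_congr rfl (fun d _ => by ring)
  rcases Pr.eq_empty_or_nonempty with hemp | hne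
  · apply hDne
    rw [hDsum]
    simp [hterm, hV, hemp]
  · have hN : 0 < Pr.card := Finset.card_pos.mpr hne
    -- degree bound
    have hdeg : (W - C (eval (fun _ => (1 : ℂ)) P) * V).totalDegree < Pr.card := by
      rw [hDsum]
      refine lt_of_le_of_lt (totalDegree_finset_sum _ _) ?_
      rw [Finset.sup_lt_iff (by exact hN)]
      intro d _
      have hv1 : ∀ p : Fin n × Fin n,
          ((X p.2 - X p.1 : MvPolynomial (Fin n) ℂ)).totalDegree ≤ 1 := by
        intro p
        refine le_trans (my_totalDegree_sub_le _ _) ?_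
        simp [totalDegree_X]
      rcases prod_shift_sub_prod (fun p : Fin n × Fin n => (X p.2 - X p.1 : MvPolynomial (Fin n) ℂ))
        (fun p => ((d p.2 : ℂ) - (d p.1 : ℂ))) hv1 Pr with h0 | hlt
      · have h0' : term d - V = 0 := h0
        rw [h0', mul_zero, totalDegree_zero]
        exact hN
      · have hlt' : (term d - V).totalDegree < Pr.card := hlt
        refine lt_of_le_of_lt (totalDegree_mul _ _) ?_
        rw [totalDegree_C]
        omega
    -- substitutions kill D
    have hsub : ∀ p ∈ Pr, aeval (sgn p.1 p.2) (W - C (eval (fun _ => (1 : ℂ)) P) * V) = 0 := by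
      intro p hp
      have hp12 : p.1 < p.2 := (Finset.mem_filter.mp hp).2
      have hVz : aeval (sgn p.1 p.2) V = 0 := by
        rw [hV, map_prod]
        refine Finset.prod_eq_zero hp ?_
        rw [map_sub, aeval_X, aeval_X]
        unfold sgn
        rw [if_pos rfl, if_neg (ne_of_lt hp12).symm, sub_self]
      rw [map_sub, map_mul, hVz, mul_zero, sub_zero, hW]
      exact subst_W_eq_zero P hP hp12
    obtain ⟨Q, hQ⟩ := prod_dvd_of_subst Pr (fun p hp => (Finset.mem_filter.mp hp).2) _ hsub
    have hQne : Q ≠ 0 := fun h => hDne (by rw [hQ, h, mul_zero])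
    obtain ⟨m, hm⟩ : ∃ m, homogeneousComponent m Q ≠ 0 := by
      by_contra h
      push_neg at h
      apply hQne
      have := sum_homogeneousComponent Q
      rw [Finset.sum_congr rfl (fun i (_ : i ∈ Finset.range (Q.totalDegree + 1)) => h i)] at this
      simpa using this.symm
    have hVne : V ≠ 0 := by
      intro h
      have := congrArg (eval (fun t : Fin n => (t : ℂ))) h
      rw [hV, map_prod, map_zero] at this
      rw [Finset.prod_eq_zero_iff] at this
      obtain ⟨p, hp, hp0⟩ := this
      have hp12 : p.1 < p.2 := (Finset.mem_filter.mp hp).2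
      rw [map_sub, eval_X, eval_X, sub_eq_zero] at hp0
      have : (p.2 : ℕ) = (p.1 : ℕ) := by exact_mod_cast hp0
      omega
    obtain ⟨c, hc⟩ : ∃ c : Fin n → ℂ, eval c (homogeneousComponent m Q * V) ≠ 0 := by
      by_contra h
      push_neg at h
      have : homogeneousComponent m Q * V = 0 :=
        MvPolynomial.funext (fun x => by rw [h x, map_zero])
      rcases mul_eq_zero.mp this with h' | h'
      · exact hm h'
      · exact hVne h'
    rw [map_mul] at hc
    have hc1 : eval c (homogeneousComponent m Q) ≠ 0 := left_ne_zero_of_mul hc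
    have hc2 : eval c V ≠ 0 := right_ne_zero_of_mul hc
    have hψV : aeval (fun t => Polynomial.C (c t) * Polynomial.X) V
        = Polynomial.C (eval c V) * Polynomial.X ^ Pr.card := by
      rw [hV, map_prod, map_prod]
      have : ∀ p ∈ Pr, aeval (fun t => Polynomial.C (c t) * Polynomial.X)
          ((X p.2 - X p.1 : MvPolynomial (Fin n) ℂ))
          = Polynomial.C (eval c (X p.2 - X p.1 : MvPolynomial (Fin n) ℂ)) * Polynomial.X := by
        intro p _
        rw [map_sub, aeval_X, aeval_X, map_sub, eval_X, eval_X, map_sub]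
        ring
      rw [Finset.prod_congr rfl this, Finset.prod_mul_distrib, Finset.prod_const]
      rw [← map_prod]
    have hψQ : aeval (fun t => Polynomial.C (c t) * Polynomial.X) Q ≠ 0 := by
      intro h
      apply hc1
      rw [← psi_coeff, h, Polynomial.coeff_zero]
    have hψVne : aeval (fun t => Polynomial.C (c t) * Polynomial.X) V ≠ 0 := by
      rw [hψV]
      exact mul_ne_zero (fun h => hc2 (by simpa using h)) (pow_ne_zero _ Polynomial.X_ne_zero)
    have h1 : Pr.card ≤ (aeval (fun t => Polynomial.C (c t) * Polynomial.X)
        (W - C (eval (fun _ => (1 : ℂ)) P) * V)).natDegree := by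
      rw [hQ, map_mul, Polynomial.natDegree_mul hψVne hψQ, hψV,
        Polynomial.natDegree_C_mul (by simpa using hc2), Polynomial.natDegree_X_pow]
      omega
    have h2 := psi_natDegree_le c (W - C (eval (fun _ => (1 : ℂ)) P) * V)
    omega

theorem symmetric_shift_operator_on_vandermonde
    (n : ℕ) (P : MvPolynomial (Fin n) ℂ) (hP : P.IsSymmetric) (k : Fin n → ℤ) :
    ∑ d ∈ P.support, P.coeff d *
        ∏ p ∈ Finset.univ.filter (fun p : Fin n × Fin n => p.1 < p.2),
          ((((k p.2 + d p.2) - (k p.1 + d p.1) : ℤ) : ℂ) /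
            (((p.2 : ℕ) : ℂ) - ((p.1 : ℕ) : ℂ)))
      = MvPolynomial.eval (fun _ => (1 : ℂ)) P *
          ∏ p ∈ Finset.univ.filter (fun p : Fin n × Fin n => p.1 < p.2),
            (((k p.2 - k p.1 : ℤ) : ℂ) / (((p.2 : ℕ) : ℂ) - ((p.1 : ℕ) : ℂ))) := by
  classical
  have hev := congrArg (eval (fun t => ((k t : ℤ) : ℂ))) (main_identity P hP)
  rw [map_sum, map_mul] at hev
  rw [eval_C] at hev
  set Pr : Finset (Fin n × Fin n) := Finset.univ.filter (fun p => p.1 < p.2) with hPr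
  set den : ℂ := ∏ p ∈ Pr, (((p.2 : ℕ) : ℂ) - ((p.1 : ℕ) : ℂ)) with hden
  have hev2 : ∑ d ∈ P.support, P.coeff d *
        ∏ p ∈ Pr, (((k p.2 : ℂ) + (d p.2 : ℂ)) - ((k p.1 : ℂ) + (d p.1 : ℂ)))
      = eval (fun _ => (1 : ℂ)) P * ∏ p ∈ Pr, ((k p.2 : ℂ) - (k p.1 : ℂ)) := by
    have e1 : ∀ d ∈ P.support, eval (fun t => ((k t : ℤ) : ℂ))
        (C (P.coeff d) * ∏ p ∈ Pr, (X p.2 - X p.1 + C ((d p.2 : ℂ) - (d p.1 : ℂ))))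
        = P.coeff d * ∏ p ∈ Pr, (((k p.2 : ℂ) + (d p.2 : ℂ)) - ((k p.1 : ℂ) + (d p.1 : ℂ))) := by
      intro d _
      rw [map_mul, eval_C, map_prod]
      congr 1
      refine Finset.prod_congr rfl (fun p _ => ?_)
      rw [map_add, map_sub, eval_X, eval_X, eval_C]
      ring
    have e2 : eval (fun t => ((k t : ℤ) : ℂ)) (∏ p ∈ Pr, (X p.2 - X p.1 : MvPolynomial (Fin n) ℂ))
        = ∏ p ∈ Pr, ((k p.2 : ℂ) - (k p.1 : ℂ)) := by
      rw [map_prod]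
      refine Finset.prod_congr rfl (fun p _ => ?_)
      rw [map_sub, eval_X, eval_X]
    rw [Finset.sum_congr rfl e1, e2] at hev
    exact hev
  calc ∑ d ∈ P.support, P.coeff d *
        ∏ p ∈ Pr, ((((k p.2 + d p.2) - (k p.1 + d p.1) : ℤ) : ℂ) /
          (((p.2 : ℕ) : ℂ) - ((p.1 : ℕ) : ℂ)))
      = (∑ d ∈ P.support, P.coeff d *
          ∏ p ∈ Pr, (((k p.2 : ℂ) + (d p.2 : ℂ)) - ((k p.1 : ℂ) + (d p.1 : ℂ)))) / den := by
        rw [Finset.sum_div]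
        refine Finset.sum_congr rfl (fun d _ => ?_)
        rw [mul_div_assoc, hden, ← Finset.prod_div_distrib]
        congr 1
        refine Finset.prod_congr rfl (fun p _ => ?_)
        congr 1
        push_cast
        ring
    _ = (eval (fun _ => (1 : ℂ)) P * ∏ p ∈ Pr, ((k p.2 : ℂ) - (k p.1 : ℂ))) / den := by
        rw [hev2]
    _ = eval (fun _ => (1 : ℂ)) P *
          ∏ p ∈ Pr, (((k p.2 - k p.1 : ℤ) : ℂ) / (((p.2 : ℕ) : ℂ) - ((p.1 : ℕ) : ℂ))) := by
        rw [mul_div_assoc, hden, ← Finset.prod_div_distrib]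
        congr 1
        refine Finset.prod_congr rfl (fun p _ => ?_)
        congr 1
        push_cast
        ring
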